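/- Suppose there exists y⁰ ∈ ℝ^k with Fᵀy⁰ < w strictly componentwise and y⁰ > 0 strictly componentwise. Then there exist a symmetric matrix Y ∈ ℝ^{k×k} and y ∈ ℝ^k such that: Fᵀy < w strictly componentwise; y > 0 strictly componentwise; every entry of FᵀYF − w yᵀ F − Fᵀ y wᵀ + w wᵀ is strictly positive; every entry of Y is strictly positive; every entry of w yᵀ − Fᵀ Y is strictly positive; and the (k+1)×(k+1) block matrix [[Y, y], [yᵀ, 1]] is positive definite. In other words, the Shor relaxation admits a strictly feasible solution (Slater's condition holds for the primal SDP). -/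

import Mathlib

open Matrix

noncomputable section

lemma exists_eps {ι : Type*} [Fintype ι] [Nonempty ι] (A B : ι → ℝ) (hA : ∀ i, 0 < A i) :
    ∃ ε : ℝ, 0 < ε ∧ ∀ i, 0 < A i + ε * B i := by
  set ε := Finset.univ.inf' Finset.univ_nonempty (fun i => A i / (|B i| + 1)) with hε
  have hεpos : 0 < ε := by
    rw [hε, Finset.lt_inf'_iff]
    intro i _
    exact div_pos (hA i) (by positivity)
  refine ⟨ε, hεpos, fun i => ?_⟩
  have hle : ε ≤ A i / (|B i| + 1) := Finset.inf'_le _ (Finset.mem_univ i)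
  have h1 : ε * (|B i| + 1) ≤ A i := by
    rw [← le_div_iff₀ (by positivity)]; exact hle
  nlinarith [mul_le_mul_of_nonneg_left (neg_abs_le (B i)) hεpos.le]

/-- Slater's condition holds for the Shor relaxation: if the polyhedron
`{y : Fᵀy ≤ w, y ≥ 0}` has an interior point, then the Shor relaxation admits a strictly
feasible solution. -/
theorem shor_relaxation_strictly_feasible {k m : ℕ} (hk : 1 ≤ k) (hm : 1 ≤ m)
    (F : Matrix (Fin k) (Fin m) ℝ) (w : Fin m → ℝ)
    (h : ∃ y0 : Fin k → ℝ, (∀ i, Fᵀ.mulVec y0 i < w i) ∧ (∀ i, 0 < y0 i)) :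
    ∃ (Y : Matrix (Fin k) (Fin k) ℝ) (y : Fin k → ℝ),
      Y.IsSymm ∧
      (∀ i, Fᵀ.mulVec y i < w i) ∧
      (∀ i, 0 < y i) ∧
      (∀ i j, 0 < (Fᵀ * Y * F - vecMulVec w (Fᵀ.mulVec y) - vecMulVec (Fᵀ.mulVec y) w
          + vecMulVec w w) i j) ∧
      (∀ i j, 0 < Y i j) ∧
      (∀ i j, 0 < (vecMulVec w y - Fᵀ * Y) i j) ∧
      (fromBlocks Y (Matrix.of fun i (_ : Unit) => y i)
        (Matrix.of fun (_ : Unit) j => y j) 1).PosDef := by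
  obtain ⟨y0, hFy, hy0⟩ := h
  haveI : Nonempty (Fin m) := ⟨⟨0, hm⟩⟩
  haveI : Nonempty (Fin k) := ⟨⟨0, hk⟩⟩
  set a : Fin m → ℝ := Fᵀ.mulVec y0 with ha
  have haa : Fᵀ.mulVec y0 = a := rfl
  have hc : ∀ i, 0 < w i - a i := fun i => sub_pos.2 (hFy i)
  obtain ⟨ε, hεpos, hεall⟩ := exists_eps
    (ι := (Fin m × Fin m) ⊕ (Fin m × Fin k))
    (Sum.elim (fun p => (w p.1 - a p.1) * (w p.2 - a p.2)) (fun p => (w p.1 - a p.1) * y0 p.2))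
    (Sum.elim (fun p => (Fᵀ * F) p.1 p.2) (fun p => -(F p.2 p.1)))
    (by rintro (⟨i,j⟩|⟨i,j⟩)
        · exact mul_pos (hc i) (hc j)
        · exact mul_pos (hc i) (hy0 j))
  set Y : Matrix (Fin k) (Fin k) ℝ := vecMulVec y0 y0 + ε • (1 : Matrix (Fin k) (Fin k) ℝ) with hY
  have haval : ∀ i, a i = ∑ x, F x i * y0 x := by
    intro i; simp [ha, mulVec, dotProduct, transpose_apply]
  have hFvv : Fᵀ * vecMulVec y0 y0 = Matrix.of fun i j => a i * y0 j := by
    ext i j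
    simp only [mul_apply, vecMulVec_apply, Matrix.of_apply, transpose_apply]
    rw [haval i, Finset.sum_mul]
    exact Finset.sum_congr rfl fun x _ => by ring
  have hFY : Fᵀ * Y = Matrix.of (fun i j => a i * y0 j) + ε • Fᵀ := by
    rw [hY, Matrix.mul_add, Matrix.mul_smul, Matrix.mul_one, hFvv]
  have hFYF : ∀ i j, (Fᵀ * Y * F) i j = a i * a j + ε * (Fᵀ * F) i j := by
    intro i j
    rw [hFY, Matrix.add_mul, Matrix.smul_mul]
    simp only [Matrix.add_apply, mul_apply, Matrix.of_apply, Matrix.smul_apply, smul_eq_mul]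
    congr 1
    rw [haval j, Finset.mul_sum]
    exact Finset.sum_congr rfl fun x _ => by ring
  have hvvmul : ∀ v : Fin k → ℝ, (vecMulVec y0 y0) *ᵥ v = (dotProduct y0 v) • y0 := by
    intro v
    funext i
    simp only [mulVec, dotProduct, vecMulVec_apply, Pi.smul_apply, smul_eq_mul]
    rw [Finset.sum_mul]
    exact Finset.sum_congr rfl fun x _ => by ring
  have hYu : ∀ v : Fin k → ℝ, Y *ᵥ v = (dotProduct y0 v) • y0 + ε • v := by
    intro v
    rw [hY, add_mulVec, hvvmul, smul_mulVec, one_mulVec]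
  refine ⟨Y, y0, ?_, hFy, hy0, ?_, ?_, ?_, ?_⟩
  · rw [Matrix.IsSymm]
    ext i j
    simp [hY, vecMulVec_apply, transpose_apply, mul_comm, Matrix.one_apply, eq_comm]
  · intro i j
    have e := hεall (Sum.inl (i, j))
    simp only [Sum.elim_inl] at e
    simp only [Matrix.add_apply, Matrix.sub_apply, vecMulVec_apply, hFYF i j, haa]
    nlinarith [e]
  · intro i j
    rcases eq_or_ne i j with rfl | hij
    · simp only [hY, Matrix.add_apply, vecMulVec_apply, Matrix.smul_apply, Matrix.one_apply_eq,
        smul_eq_mul, mul_one]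
      nlinarith [hy0 i, hεpos]
    · simp only [hY, Matrix.add_apply, vecMulVec_apply, Matrix.smul_apply,
        Matrix.one_apply_ne hij, smul_eq_mul, mul_zero, add_zero]
      exact mul_pos (hy0 i) (hy0 j)
  · intro i j
    have e := hεall (Sum.inr (i, j))
    simp only [Sum.elim_inr] at e
    simp only [Matrix.sub_apply, vecMulVec_apply, hFY, Matrix.add_apply, Matrix.of_apply,
      Matrix.smul_apply, transpose_apply, smul_eq_mul]
    nlinarith [e]
  · rw [posDef_iff_dotProduct_mulVec]
    constructor
    · rw [Matrix.IsHermitian]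
      ext i j
      rcases i with i | i <;> rcases j with j | j <;>
        simp [fromBlocks, conjTranspose, hY, vecMulVec_apply, Matrix.one_apply, mul_comm, eq_comm]
    · intro x hx
      set u : Fin k → ℝ := x ∘ Sum.inl with hu
      set t : ℝ := x (Sum.inr ()) with ht
      have hxe : x = Sum.elim u (fun _ => t) := by
        funext i; rcases i with i | i
        · rfl
        · cases i; rfl
      have hB : (Matrix.of fun i (_ : Unit) => y0 i) *ᵥ (x ∘ Sum.inr) = t • y0 := by
        funext i
        simp only [mulVec, dotProduct, Matrix.of_apply, Fintype.sum_unique, Function.comp_apply,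
          Pi.smul_apply, smul_eq_mul]
        rw [← ht]; ring
      have hC : (Matrix.of fun (_ : Unit) j => y0 j) *ᵥ u = fun _ => dotProduct y0 u := by
        funext i; simp [mulVec, dotProduct]
      have hquad : dotProduct (star x) ((fromBlocks Y (Matrix.of fun i (_ : Unit) => y0 i)
          (Matrix.of fun (_ : Unit) j => y0 j) (1 : Matrix Unit Unit ℝ)) *ᵥ x) =
          (dotProduct y0 u + t) ^ 2 + ε * dotProduct u u := by
        rw [star_trivial]
        nth_rewrite 1 [hxe]
        rw [fromBlocks_mulVec, sumElim_dotProduct_sumElim, hYu, hB, hC, Matrix.one_mulVec]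
        rw [dotProduct_add, dotProduct_add, dotProduct_smul, dotProduct_smul, dotProduct_smul,
          dotProduct_comm u y0]
        have hux : ∀ i, x (Sum.inl i) = u i := fun _ => rfl
        have hrx : ∀ v : Unit, x (Sum.inr v) = t := fun _ => rfl
        simp only [dotProduct, Fintype.sum_unique, Function.comp_apply, Pi.add_apply,
          smul_eq_mul, hux, hrx]
        ring
      rw [hquad]
      by_cases hu0 : u = 0
      · have ht0 : t ≠ 0 := by
          intro ht0
          apply hx
          funext i
          rcases i with i | i
          · exact congrFun hu0 i
          · cases i; exact ht0
        simp only [hu0, dotProduct_zero, zero_add, mul_zero, add_zero]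
        exact lt_of_le_of_ne (sq_nonneg t) (Ne.symm (pow_ne_zero 2 ht0))
      · have h1 : 0 < dotProduct u u := by
          have h2 : 0 ≤ dotProduct u u := Finset.sum_nonneg (fun i _ => mul_self_nonneg _)
          rcases h2.lt_or_eq with h3 | h3
          · exact h3
          · exact absurd (dotProduct_self_eq_zero.mp h3.symm) hu0
        nlinarith [sq_nonneg (dotProduct y0 u + t), mul_pos hεpos h1]
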